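/- Let (X,d) be a metric space, μ a Borel measure on X, N > 1 a real number, and x₀ ∈ X. Assume that 0 < μ(B_{x₀}(r)) < ∞ for every r > 0, that the function r ↦ μ(B_{x₀}(r))/r^N is nonincreasing on (0,∞), and that μ(B_{x₀}(r))/(ω_N r^N) converges to some θ ≥ 0 as r → ∞. Then limsup_{r→∞} μ⁺(B_{x₀}(r)) / μ(B_{x₀}(r))^{(N−1)/N} ≤ N · ω_N^{1/N} · θ^{1/N}. -/

import Mathlib

open MeasureTheory Metric Filter Set
open scoped Topology ENNReal

/-- The constant `ω_N = π^{N/2} / Γ(1 + N/2)`. -/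
noncomputable def omegaN (N : ℝ) : ℝ := Real.pi ^ (N / 2) / Real.Gamma (1 + N / 2)

/-- The `ε`-neighborhood `Ω_ε = {x : ∃ y ∈ Ω, d(x,y) < ε}`. -/
def eNbhd {X : Type*} [MetricSpace X] (Ω : Set X) (ε : ℝ) : Set X :=
  {x | ∃ y ∈ Ω, dist x y < ε}

/-- The Minkowski content `μ⁺(Ω) = liminf_{ε → 0⁺} μ(Ω_ε \ Ω)/ε`. -/
noncomputable def minkowskiContent {X : Type*} [MetricSpace X] [MeasurableSpace X]
    (μ : Measure X) (Ω : Set X) : ℝ≥0∞ :=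
  Filter.liminf (fun ε : ℝ => μ (eNbhd Ω ε \ Ω) / ENNReal.ofReal ε) (𝓝[>] (0 : ℝ))

/-- Key quantitative bound: for `r > 0`, the Minkowski content of the ball of radius `r`
is at most `μ(B_r) · N / r`, using the Bishop–Gromov monotonicity. -/
theorem minkowskiContent_ball_le
    {X : Type*} [MetricSpace X] [MeasurableSpace X] [BorelSpace X]
    (μ : Measure X) (N : ℝ) (hN : 1 < N) (x₀ : X)
    (hfin : ∀ r : ℝ, 0 < r → μ (Metric.ball x₀ r) < ⊤)
    (hBG : ∀ r₁ r₂ : ℝ, 0 < r₁ → r₁ ≤ r₂ →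
      (μ (Metric.ball x₀ r₂)).toReal / r₂ ^ N ≤ (μ (Metric.ball x₀ r₁)).toReal / r₁ ^ N)
    (r : ℝ) (hr : 0 < r) :
    minkowskiContent μ (Metric.ball x₀ r)
      ≤ ENNReal.ofReal ((μ (Metric.ball x₀ r)).toReal * N / r) := by
  set m : ℝ := (μ (Metric.ball x₀ r)).toReal with hm
  have hm0 : 0 ≤ m := ENNReal.toReal_nonneg
  have hrN : (0:ℝ) < r ^ N := Real.rpow_pos_of_pos hr N
  -- pointwise bound for ε > 0
  have key : ∀ ε : ℝ, 0 < ε →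
      μ (eNbhd (Metric.ball x₀ r) ε \ Metric.ball x₀ r)
        ≤ ENNReal.ofReal (m * ((r + ε) ^ N / r ^ N - 1)) := by
    intro ε hε
    have hsub : eNbhd (Metric.ball x₀ r) ε ⊆ Metric.ball x₀ (r + ε) := by
      rintro x ⟨y, hy, hxy⟩
      have := dist_triangle x y x₀
      simp only [Metric.mem_ball] at hy ⊢
      linarith
    have h1 : μ (eNbhd (Metric.ball x₀ r) ε \ Metric.ball x₀ r)
        ≤ μ (Metric.ball x₀ (r + ε)) - μ (Metric.ball x₀ r) := by
      refine le_trans (measure_mono (diff_subset_diff_left hsub)) ?_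
      rw [measure_diff (Metric.ball_subset_ball (by linarith)) measurableSet_ball.nullMeasurableSet
        (hfin r hr).ne]
    refine h1.trans ?_
    rw [tsub_le_iff_right]
    have h2 : μ (Metric.ball x₀ (r + ε)) =
        ENNReal.ofReal ((μ (Metric.ball x₀ (r + ε))).toReal) := by
      rw [ENNReal.ofReal_toReal (hfin (r + ε) (by linarith)).ne]
    have h3 : μ (Metric.ball x₀ r) = ENNReal.ofReal m := by
      rw [hm, ENNReal.ofReal_toReal (hfin r hr).ne]
    have honele : (1:ℝ) ≤ (r + ε) ^ N / r ^ N := by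
      rw [le_div_iff₀ hrN, one_mul]
      exact Real.rpow_le_rpow hr.le (by linarith) (by linarith)
    rw [h2, h3, ← ENNReal.ofReal_add (mul_nonneg hm0 (by linarith)) hm0]
    apply ENNReal.ofReal_le_ofReal
    have h4 := hBG r (r + ε) hr (by linarith)
    have h5 : (0:ℝ) < (r + ε) ^ N := Real.rpow_pos_of_pos (by linarith) N
    have h6 : (μ (Metric.ball x₀ (r + ε))).toReal ≤ m * ((r + ε) ^ N / r ^ N) := by
      rw [div_le_div_iff₀ h5 hrN] at h4
      rw [← mul_div_assoc, le_div_iff₀ hrN]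
      linarith
    nlinarith [h6]
  -- the comparison function
  set g : ℝ → ℝ≥0∞ := fun ε => ENNReal.ofReal (m * ((r + ε) ^ N / r ^ N - 1) / ε) with hg
  have hle : ∀ᶠ ε in 𝓝[>] (0:ℝ),
      μ (eNbhd (Metric.ball x₀ r) ε \ Metric.ball x₀ r) / ENNReal.ofReal ε ≤ g ε := by
    filter_upwards [self_mem_nhdsWithin] with ε (hε : 0 < ε)
    rw [hg]
    simp only
    rw [ENNReal.ofReal_div_of_pos hε]
    exact ENNReal.div_le_div_right (key ε hε) _
  -- g tends to ofReal (m * N / r)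
  have hderiv : HasDerivAt (fun ε : ℝ => (r + ε) ^ N) (N * r ^ (N - 1)) 0 := by
    have h1 : HasDerivAt (fun x : ℝ => x ^ N) (N * r ^ (N - 1)) r :=
      Real.hasDerivAt_rpow_const (Or.inl hr.ne')
    have h2 : HasDerivAt (fun ε : ℝ => r + ε) 1 0 := (hasDerivAt_id (0:ℝ)).const_add r
    have h1' : HasDerivAt (fun x : ℝ => x ^ N) (N * r ^ (N - 1)) ((fun ε : ℝ => r + ε) 0) := by
      simpa using h1
    have := HasDerivAt.comp (0:ℝ) h1' h2
    rw [mul_one] at this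
    exact this
  have hslope : Tendsto (fun ε : ℝ => ((r + ε) ^ N - r ^ N) / ε) (𝓝[>] (0:ℝ))
      (𝓝 (N * r ^ (N - 1))) := by
    have := hasDerivAt_iff_tendsto_slope.mp hderiv
    have h := this.mono_left (nhdsWithin_mono 0 (fun x hx => ne_of_gt hx))
    refine h.congr' ?_
    filter_upwards [self_mem_nhdsWithin] with ε (hε : 0 < ε)
    rw [slope_def_field]
    simp
  have hgtend : Tendsto g (𝓝[>] (0:ℝ)) (𝓝 (ENNReal.ofReal (m * N / r))) := by
    have hmul : Tendsto (fun ε : ℝ => (m / r ^ N) * (((r + ε) ^ N - r ^ N) / ε))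
        (𝓝[>] (0:ℝ)) (𝓝 ((m / r ^ N) * (N * r ^ (N - 1)))) := hslope.const_mul _
    have heq : (m / r ^ N) * (N * r ^ (N - 1)) = m * N / r := by
      have : r ^ (N - 1) = r ^ N / r := by
        rw [Real.rpow_sub hr, Real.rpow_one]
      rw [this]
      field_simp
    rw [heq] at hmul
    have := (ENNReal.continuous_ofReal.tendsto _).comp hmul
    refine this.congr' ?_
    filter_upwards [self_mem_nhdsWithin] with ε (hε : 0 < ε)
    rw [hg]
    simp only [Function.comp_apply]
    congr 1
    field_simp
  calc minkowskiContent μ (Metric.ball x₀ r)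
      ≤ Filter.liminf g (𝓝[>] (0:ℝ)) := Filter.liminf_le_liminf hle
    _ = ENNReal.ofReal (m * N / r) := hgtend.liminf_eq

/-- Along large balls, the isoperimetric ratio is asymptotically at most
`N ω_N^{1/N} θ^{1/N}`:
`limsup_{r→∞} μ⁺(B_{x₀}(r)) / μ(B_{x₀}(r))^{(N-1)/N} ≤ N ω_N^{1/N} θ^{1/N}`. -/
theorem limsup_isoperimetric_ratio_balls
    {X : Type*} [MetricSpace X] [MeasurableSpace X] [BorelSpace X]
    (μ : Measure X) (N : ℝ) (hN : 1 < N) (x₀ : X)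
    (hpos : ∀ r : ℝ, 0 < r → 0 < μ (Metric.ball x₀ r))
    (hfin : ∀ r : ℝ, 0 < r → μ (Metric.ball x₀ r) < ⊤)
    (hBG : ∀ r₁ r₂ : ℝ, 0 < r₁ → r₁ ≤ r₂ →
      (μ (Metric.ball x₀ r₂)).toReal / r₂ ^ N ≤ (μ (Metric.ball x₀ r₁)).toReal / r₁ ^ N)
    (θ : ℝ) (hθ : 0 ≤ θ)
    (hAVR : Tendsto (fun r : ℝ => (μ (Metric.ball x₀ r)).toReal / (omegaN N * r ^ N))
      atTop (𝓝 θ)) :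
    Filter.limsup
        (fun r : ℝ =>
          minkowskiContent μ (Metric.ball x₀ r) / μ (Metric.ball x₀ r) ^ ((N - 1) / N))
        atTop
      ≤ ENNReal.ofReal (N * omegaN N ^ (1 / N) * θ ^ (1 / N)) := by
  have hN0 : (0:ℝ) < N := by linarith
  have hω : 0 < omegaN N := by
    unfold omegaN
    exact div_pos (Real.rpow_pos_of_pos Real.pi_pos _)
      (Real.Gamma_pos_of_pos (by linarith))
  set G : ℝ → ℝ≥0∞ := fun r =>
    ENNReal.ofReal (N * ((μ (Metric.ball x₀ r)).toReal / r ^ N) ^ (1 / N)) with hG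
  -- pointwise eventual bound
  have hle : ∀ᶠ r in atTop,
      minkowskiContent μ (Metric.ball x₀ r) / μ (Metric.ball x₀ r) ^ ((N - 1) / N) ≤ G r := by
    filter_upwards [eventually_gt_atTop (0:ℝ)] with r hr
    set m : ℝ := (μ (Metric.ball x₀ r)).toReal with hm
    have hm0 : 0 < m := ENNReal.toReal_pos (hpos r hr).ne' (hfin r hr).ne
    have hrN : (0:ℝ) < r ^ N := Real.rpow_pos_of_pos hr N
    have h1 : μ (Metric.ball x₀ r) = ENNReal.ofReal m := by
      rw [hm, ENNReal.ofReal_toReal (hfin r hr).ne]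
    have hpow : μ (Metric.ball x₀ r) ^ ((N - 1) / N)
        = ENNReal.ofReal (m ^ ((N - 1) / N)) := by
      rw [h1, ENNReal.ofReal_rpow_of_pos hm0]
    have hb : 0 < m ^ ((N - 1) / N) := Real.rpow_pos_of_pos hm0 _
    calc minkowskiContent μ (Metric.ball x₀ r) / μ (Metric.ball x₀ r) ^ ((N - 1) / N)
        ≤ ENNReal.ofReal (m * N / r) / ENNReal.ofReal (m ^ ((N - 1) / N)) := by
          rw [hpow]
          exact ENNReal.div_le_div_right
            (minkowskiContent_ball_le μ N hN x₀ hfin hBG r hr) _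
      _ = G r := by
          rw [← ENNReal.ofReal_div_of_pos hb, hG]
          congr 1
          have h2 : (m / r ^ N) ^ (1 / N) = m ^ (1 / N) / r := by
            rw [Real.div_rpow hm0.le hrN.le, ← Real.rpow_mul hr.le,
              mul_one_div_cancel hN0.ne', Real.rpow_one]
          rw [h2]
          have h3 : m / m ^ ((N - 1) / N) = m ^ (1 / N) := by
            rw [div_eq_iff hb.ne', ← Real.rpow_add hm0,
              show 1 / N + (N - 1) / N = 1 by field_simp; ring, Real.rpow_one]
          rw [← h3]
          field_simp
  -- G tends to the limit value
  have hLtend : Tendsto (fun r : ℝ => (μ (Metric.ball x₀ r)).toReal / r ^ N) atTop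
      (𝓝 (omegaN N * θ)) := by
    have := hAVR.const_mul (omegaN N)
    refine this.congr' ?_
    filter_upwards [eventually_gt_atTop (0:ℝ)] with r hr
    rw [mul_div_assoc']
    rw [mul_div_mul_left _ _ hω.ne']
  have hcont : ContinuousAt (fun x : ℝ => ENNReal.ofReal (N * x ^ (1 / N))) (omegaN N * θ) := by
    apply ENNReal.continuous_ofReal.continuousAt.comp
    exact (continuous_const.continuousAt).mul
      (Real.continuousAt_rpow_const _ _ (Or.inr (by positivity)))
  have hGtend : Tendsto G atTop (𝓝 (ENNReal.ofReal (N * (omegaN N * θ) ^ (1 / N)))) :=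
    hcont.tendsto.comp hLtend
  have hfinal : N * (omegaN N * θ) ^ (1 / N) = N * omegaN N ^ (1 / N) * θ ^ (1 / N) := by
    rw [Real.mul_rpow hω.le hθ]; ring
  calc Filter.limsup _ atTop ≤ Filter.limsup G atTop := Filter.limsup_le_limsup hle
    _ = ENNReal.ofReal (N * (omegaN N * θ) ^ (1 / N)) := hGtend.limsup_eq
    _ = ENNReal.ofReal (N * omegaN N ^ (1 / N) * θ ^ (1 / N)) := by rw [hfinal]
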